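/- Let m ≥ 1, f ∈ ℝ^m with f_l ≥ 0 for all l, d ≥ 0, ρ > 0, and b ∈ ℝ^m. Define ν ∈ ℝ^m componentwise by ν_l = sgn(b_l) · max(|b_l| − f_l/ρ, 0), and define v* = 0 if ρ·‖ν‖₂ ≤ d, and v* = (1 − d/(ρ‖ν‖₂)) ν otherwise. Then v* is a global minimizer of φ(v) = Σ_{l=1}^m f_l |v_l| + d ‖v‖₂ + (ρ/2) ‖v − b‖₂²: for every v ∈ ℝ^m, φ(v*) ≤ φ(v). (Proposition 4.) -/

import Mathlib

open BigOperators

/-- The Euclidean (ℓ2) norm on `ℝ^m`. -/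
noncomputable def l2norm {m : ℕ} (x : Fin m → ℝ) : ℝ :=
  Real.sqrt (∑ l, x l ^ 2)

lemma l2norm_nonneg {m : ℕ} (x : Fin m → ℝ) : 0 ≤ l2norm x :=
  Real.sqrt_nonneg _

lemma l2norm_sq {m : ℕ} (x : Fin m → ℝ) : (l2norm x) ^ 2 = ∑ l, x l ^ 2 :=
  Real.sq_sqrt (Finset.sum_nonneg fun _ _ => sq_nonneg _)

/-- one-dimensional subgradient inequality for the weighted absolute value -/
lemma sub1 (fl pl wl t : ℝ) (h1 : |pl| ≤ fl) (h2 : pl * wl = fl * |wl|) :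
    fl * |wl| + pl * (t - wl) ≤ fl * |t| := by
  have h3 : pl * t ≤ fl * |t| := by
    calc pl * t ≤ |pl * t| := le_abs_self _
      _ = |pl| * |t| := abs_mul _ _
      _ ≤ fl * |t| := mul_le_mul_of_nonneg_right h1 (abs_nonneg _)
  nlinarith [h2, h3]

lemma sign_mul_abs' (x : ℝ) (hx : x ≠ 0) : Real.sign x * |x| = x := by
  rcases lt_or_gt_of_ne hx with h | h
  · rw [Real.sign_of_neg h, abs_of_neg h]; ring
  · rw [Real.sign_of_pos h, abs_of_pos h]; ring

lemma sign_sq (x : ℝ) (hx : x ≠ 0) : Real.sign x * Real.sign x = 1 := by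
  rcases lt_or_gt_of_ne hx with h | h
  · rw [Real.sign_of_neg h]; norm_num
  · rw [Real.sign_of_pos h]; norm_num

/-- abstract algebraic identity for the subgradient in the shrinkage case -/
lemma hp_absB (ρ d N f A s c : ℝ) (hρ : ρ ≠ 0) (hN : N ≠ 0)
    (hc : c = 1 - d / (ρ * N)) :
    ρ * ((s * A) - c * (s * (A - f / ρ))) - d * ((s * (A - f / ρ)) / N) = s * f := by
  subst hc; field_simp; ring

/-- abstract algebraic identity for the subgradient in the zero case -/
lemma hp_absA (ρ d f A s : ℝ) (hρ : ρ ≠ 0) (hd : d ≠ 0) :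
    ρ * (s * A) - d * (ρ * (s * (A - f / ρ)) / d) = s * f := by
  field_simp; ring

/-- Key first-order optimality lemma: if `p, q` witness a zero subgradient at `w`,
then `w` is a global minimizer. -/
lemma key_min {m : ℕ} (f : Fin m → ℝ) (d ρ : ℝ) (hd : 0 ≤ d) (hρ : 0 < ρ)
    (b w v p q : Fin m → ℝ)
    (h1 : ∀ l, f l * |w l| + p l * (v l - w l) ≤ f l * |v l|)
    (hq1 : ∑ l, q l ^ 2 ≤ 1)
    (hq2 : ∑ l, q l * w l = l2norm w)
    (heq : ∀ l, p l + d * q l = ρ * (b l - w l)) :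
    (∑ l, f l * |w l|) + d * l2norm w + (ρ / 2) * (∑ l, (w l - b l) ^ 2)
      ≤ (∑ l, f l * |v l|) + d * l2norm v + (ρ / 2) * (∑ l, (v l - b l) ^ 2) := by
  have hA : (∑ l, f l * |w l|) + (∑ l, p l * (v l - w l)) ≤ ∑ l, f l * |v l| := by
    rw [← Finset.sum_add_distrib]
    exact Finset.sum_le_sum fun l _ => h1 l
  have hCS : ∑ l, q l * v l ≤ l2norm v := by
    have h := Real.sum_mul_le_sqrt_mul_sqrt Finset.univ q v
    have hsq : Real.sqrt (∑ l, q l ^ 2) ≤ 1 := by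
      have h1 := Real.sqrt_le_sqrt hq1
      simpa using h1
    have hv : (0:ℝ) ≤ Real.sqrt (∑ l, v l ^ 2) := Real.sqrt_nonneg _
    calc ∑ l, q l * v l ≤ Real.sqrt (∑ l, q l ^ 2) * Real.sqrt (∑ l, v l ^ 2) := h
      _ ≤ 1 * Real.sqrt (∑ l, v l ^ 2) := mul_le_mul_of_nonneg_right hsq hv
      _ = l2norm v := by rw [one_mul]; rfl
  have hB : d * (∑ l, q l * v l) ≤ d * l2norm v := mul_le_mul_of_nonneg_left hCS hd
  have e2 : d * (∑ l, q l * v l)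
      = d * l2norm w + d * (∑ l, q l * (v l - w l)) := by
    have h : ∑ l, q l * v l = (∑ l, q l * w l) + ∑ l, q l * (v l - w l) := by
      rw [← Finset.sum_add_distrib]
      exact Finset.sum_congr rfl fun l _ => by ring
    rw [h, hq2]; ring
  have e3 : (∑ l, p l * (v l - w l)) + d * (∑ l, q l * (v l - w l))
      = ρ * ∑ l, (b l - w l) * (v l - w l) := by
    rw [Finset.mul_sum, Finset.mul_sum, ← Finset.sum_add_distrib]
    exact Finset.sum_congr rfl fun l _ => by linear_combination (v l - w l) * heq l
  have e5 : ∑ l, (v l - b l) ^ 2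
      = (∑ l, (w l - b l) ^ 2) - 2 * (∑ l, (b l - w l) * (v l - w l))
        + ∑ l, (v l - w l) ^ 2 := by
    rw [Finset.mul_sum, ← Finset.sum_sub_distrib, ← Finset.sum_add_distrib]
    exact Finset.sum_congr rfl fun l _ => by ring
  have e6 : (ρ / 2) * (∑ l, (v l - b l) ^ 2)
      = (ρ / 2) * (∑ l, (w l - b l) ^ 2) - ρ * (∑ l, (b l - w l) * (v l - w l))
        + (ρ / 2) * (∑ l, (v l - w l) ^ 2) := by
    rw [e5]; ring
  have h0 : 0 ≤ (ρ / 2) * (∑ l, (v l - w l) ^ 2) :=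
    mul_nonneg (by linarith) (Finset.sum_nonneg fun l _ => sq_nonneg _)
  linarith

/-- Proposition 4: the explicit minimizer of the
weighted-ℓ1 + group-ℓ2 + proximal-quadratic objective
`φ(v) = Σ_l f_l |v_l| + d ‖v‖₂ + (ρ/2) ‖v − b‖₂²`. -/
theorem prop4_prox_minimizer
    {m : ℕ} (hm : 1 ≤ m)
    (f : Fin m → ℝ) (hf : ∀ l, 0 ≤ f l)
    (d : ℝ) (hd : 0 ≤ d) (ρ : ℝ) (hρ : 0 < ρ)
    (b : Fin m → ℝ)
    (ν : Fin m → ℝ)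
    (hν : ∀ l, ν l = Real.sign (b l) * max (|b l| - f l / ρ) 0)
    (vstar : Fin m → ℝ)
    (hvstar : vstar =
      if ρ * l2norm ν ≤ d then 0 else (1 - d / (ρ * l2norm ν)) • ν) :
    ∀ v : Fin m → ℝ,
      (∑ l, f l * |vstar l|) + d * l2norm vstar
          + (ρ / 2) * (∑ l, (vstar l - b l) ^ 2)
        ≤ (∑ l, f l * |v l|) + d * l2norm v
          + (ρ / 2) * (∑ l, (v l - b l) ^ 2) := by
  intro v
  have hNnn : 0 ≤ l2norm ν := l2norm_nonneg ν
  have hNsq : (l2norm ν) ^ 2 = ∑ l, ν l ^ 2 := l2norm_sq ν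
  have hnu0 : ∀ l, ν l = 0 → ρ * |b l| ≤ f l := by
    intro l h
    rw [hν l] at h
    rcases mul_eq_zero.1 h with hs | hmx
    · have hb : b l = 0 := Real.sign_eq_zero_iff.1 hs
      rw [hb]; simpa using hf l
    · have h1 : |b l| - f l / ρ ≤ 0 := by
        by_contra hlt
        push_neg at hlt
        rw [max_eq_left hlt.le] at hmx; linarith
      have h2 : |b l| ≤ f l / ρ := by linarith
      calc ρ * |b l| ≤ ρ * (f l / ρ) := mul_le_mul_of_nonneg_left h2 hρ.le
        _ = f l := by field_simp
  have hnu1 : ∀ l, ν l ≠ 0 →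
      b l ≠ 0 ∧ 0 < |b l| - f l / ρ ∧ ν l = Real.sign (b l) * (|b l| - f l / ρ) := by
    intro l h
    rw [hν l] at h
    have hb : b l ≠ 0 := by
      intro hb; rw [hb] at h; simp [Real.sign_zero] at h
    have hpos : 0 < |b l| - f l / ρ := by
      by_contra hle
      push_neg at hle
      rw [max_eq_right hle] at h; simp at h
    exact ⟨hb, hpos, by rw [hν l, max_eq_left hpos.le]⟩
  have hsigns : ∀ l, b l ≠ 0 → |Real.sign (b l)| = 1 := by
    intro l hb
    rcases Real.sign_apply_eq_of_ne_zero (b l) hb with h | h <;> rw [h] <;> norm_num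
  by_cases hle : ρ * l2norm ν ≤ d
  · -- case v* = 0
    rw [if_pos hle] at hvstar
    subst hvstar
    have hdν : ∀ l, ν l ≠ 0 → d ≠ 0 := by
      intro l hl hd0
      rw [hd0] at hle
      have hN0 : l2norm ν ≤ 0 := by nlinarith
      have hNe : l2norm ν = 0 := le_antisymm hN0 hNnn
      have hsum : ∑ j, ν j ^ 2 = 0 := by rw [← hNsq, hNe]; ring
      have hz := (Finset.sum_eq_zero_iff_of_nonneg (fun j _ => sq_nonneg (ν j))).1 hsum
      exact hl (pow_eq_zero_iff (by norm_num : 2 ≠ 0) |>.1 (hz l (Finset.mem_univ l)))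
    refine key_min f d ρ hd hρ b 0 v
      (fun l => ρ * b l - d * (if d = 0 then 0 else ρ * ν l / d))
      (fun l => if d = 0 then 0 else ρ * ν l / d) ?_ ?_ ?_ ?_
    · intro l
      have hple : |ρ * b l - d * (if d = 0 then 0 else ρ * ν l / d)| ≤ f l := by
        by_cases hl : ν l = 0
        · have hq0 : (if d = 0 then (0:ℝ) else ρ * ν l / d) = 0 := by
            split <;> simp [hl]
          rw [hq0, mul_zero, sub_zero, abs_mul, abs_of_pos hρ]
          exact hnu0 l hl
        · obtain ⟨hb, hpos, hform⟩ := hnu1 l hl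
          have hd0 : d ≠ 0 := hdν l hl
          rw [if_neg hd0]
          have hbe2 : Real.sign (b l) * |b l| = b l := sign_mul_abs' (b l) hb
          have hp : ρ * b l - d * (ρ * ν l / d) = Real.sign (b l) * f l := by
            rw [hform]
            linear_combination hp_absA ρ d (f l) (|b l|) (Real.sign (b l)) hρ.ne' hd0
              - ρ * hbe2
          rw [hp, abs_mul, hsigns l hb, one_mul, abs_of_nonneg (hf l)]
      have h2 : (ρ * b l - d * (if d = 0 then 0 else ρ * ν l / d)) * (0:ℝ)
          = f l * |(0:ℝ)| := by simp
      have key := sub1 (f l) (ρ * b l - d * (if d = 0 then 0 else ρ * ν l / d))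
        0 (v l) hple h2
      simpa using key
    · by_cases hd0 : d = 0
      · simp [hd0]
      · have hd' : 0 < d := lt_of_le_of_ne hd (Ne.symm hd0)
        have hcalc : ∑ l, (if d = 0 then (0:ℝ) else ρ * ν l / d) ^ 2
            = (ρ * l2norm ν / d) ^ 2 := by
          have h : ∑ l, (if d = 0 then (0:ℝ) else ρ * ν l / d) ^ 2
              = (ρ / d) ^ 2 * ∑ l, ν l ^ 2 := by
            rw [Finset.mul_sum]
            refine Finset.sum_congr rfl fun l _ => ?_
            rw [if_neg hd0]; field_simp
          rw [h, ← hNsq]; ring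
        rw [hcalc]
        have h1 : ρ * l2norm ν ≤ d := hle
        have h2 : 0 ≤ ρ * l2norm ν := mul_nonneg hρ.le hNnn
        have h3 : ρ * l2norm ν / d ≤ 1 := (div_le_one hd').2 h1
        have h4 : 0 ≤ ρ * l2norm ν / d := div_nonneg h2 hd'.le
        nlinarith
    · simp [l2norm]
    · intro l; simp only [Pi.zero_apply, sub_zero]; ring
  · -- case v* = (1 - d/(ρ N)) • ν
    rw [if_neg hle] at hvstar
    push_neg at hle
    have hN0 : 0 < l2norm ν := by
      rcases lt_or_eq_of_le hNnn with h | h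
      · exact h
      · exfalso; rw [← h] at hle; simp at hle; linarith
    set c : ℝ := 1 - d / (ρ * l2norm ν) with hc
    have hcpos : 0 < c := by
      have h1 : d / (ρ * l2norm ν) < 1 := (div_lt_one (mul_pos hρ hN0)).2 hle
      rw [hc]; linarith
    subst hvstar
    refine key_min f d ρ hd hρ b (c • ν) v
      (fun l => ρ * (b l - c * ν l) - d * (ν l / l2norm ν))
      (fun l => ν l / l2norm ν) ?_ ?_ ?_ ?_
    · intro l
      simp only [Pi.smul_apply, smul_eq_mul]
      by_cases hl : ν l = 0
      · have hp : ρ * (b l - c * ν l) - d * (ν l / l2norm ν) = ρ * b l := by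
          rw [hl]; ring
        have hple : |ρ * (b l - c * ν l) - d * (ν l / l2norm ν)| ≤ f l := by
          rw [hp, abs_mul, abs_of_pos hρ]; exact hnu0 l hl
        have h2 : (ρ * (b l - c * ν l) - d * (ν l / l2norm ν)) * (c * ν l)
            = f l * |c * ν l| := by rw [hl]; simp
        exact sub1 (f l) _ (c * ν l) (v l) hple h2
      · obtain ⟨hb, hpos, hform⟩ := hnu1 l hl
        have hbe2 : Real.sign (b l) * |b l| = b l := sign_mul_abs' (b l) hb
        have hs2 : Real.sign (b l) * Real.sign (b l) = 1 := sign_sq (b l) hb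
        have hp : ρ * (b l - c * ν l) - d * (ν l / l2norm ν)
            = Real.sign (b l) * f l := by
          rw [hform]
          linear_combination hp_absB ρ d (l2norm ν) (f l) (|b l|) (Real.sign (b l)) c
            hρ.ne' hN0.ne' hc - ρ * hbe2
        have hple : |ρ * (b l - c * ν l) - d * (ν l / l2norm ν)| ≤ f l := by
          rw [hp, abs_mul, hsigns l hb, one_mul, abs_of_nonneg (hf l)]
        have habs : |c * ν l| = c * (|b l| - f l / ρ) := by
          rw [hform, abs_mul, abs_mul, hsigns l hb, abs_of_pos hcpos,
            abs_of_pos hpos, one_mul]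
        have h2 : (ρ * (b l - c * ν l) - d * (ν l / l2norm ν)) * (c * ν l)
            = f l * |c * ν l| := by
          rw [hp, habs, hform]
          linear_combination (f l * c * (|b l| - f l / ρ)) * hs2
        exact sub1 (f l) _ (c * ν l) (v l) hple h2
    · have h : ∑ l, (ν l / l2norm ν) ^ 2 = (∑ l, ν l ^ 2) / (l2norm ν) ^ 2 := by
        rw [Finset.sum_div]
        exact Finset.sum_congr rfl fun l _ => div_pow _ _ _
      rw [h, ← hNsq, div_self (pow_ne_zero 2 hN0.ne')]
    · simp only [Pi.smul_apply, smul_eq_mul]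
      have h1 : ∑ l, (ν l / l2norm ν) * (c * ν l) = c * l2norm ν := by
        have h : ∑ l, (ν l / l2norm ν) * (c * ν l)
            = (c / l2norm ν) * ∑ l, ν l ^ 2 := by
          rw [Finset.mul_sum]
          refine Finset.sum_congr rfl fun l _ => ?_
          field_simp [hN0.ne']
        rw [h, ← hNsq]
        field_simp [hN0.ne']
      have h2 : l2norm (c • ν) = c * l2norm ν := by
        have hterm : ∀ l, ((c • ν) l) ^ 2 = c ^ 2 * (ν l) ^ 2 := fun l => by
          simp only [Pi.smul_apply, smul_eq_mul]; ring
        unfold l2norm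
        rw [Finset.sum_congr rfl (fun l _ => hterm l), ← Finset.mul_sum,
          Real.sqrt_mul (sq_nonneg c), Real.sqrt_sq hcpos.le]
      rw [h1, h2]
    · intro l
      simp only [Pi.smul_apply, smul_eq_mul]
      ring
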